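/- Fix i ∈ I and let Q^i be a probability satisfying the valuation identity for asset i. Then Q^i[ζ_n < ζ for all n ∈ ℕ] = 1; equivalently, Q^i[ζ_n = ζ] = 0 for every n ∈ ℕ. In particular, the sequence (ζ_n) Q^i-a.s. announces the default time ζ. -/

import Mathlib

open MeasureTheory Filter Set
open scoped NNReal ENNReal

noncomputable section

namespace ExchangeOptions

variable {Ω : Type*} {m : MeasurableSpace Ω}

/-- An extended (possibly infinite-valued) stopping time for the filtration `F`. -/
def IsExtStoppingTime (F : Filtration ℝ≥0 m) (τ : Ω → ℝ≥0∞) : Prop :=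
  ∀ t : ℝ≥0, MeasurableSet[F t] {ω | τ ω ≤ (t : ℝ≥0∞)}

/-- The σ-algebra `F_τ` at an extended stopping time `τ`. -/
def IsExtStoppingTime.measurableSpace {F : Filtration ℝ≥0 m} {τ : Ω → ℝ≥0∞}
    (hτ : IsExtStoppingTime F τ) : MeasurableSpace Ω where
  MeasurableSet' A := ∀ t : ℝ≥0, MeasurableSet[F t] (A ∩ {ω | τ ω ≤ (t : ℝ≥0∞)})
  measurableSet_empty := fun t => by simp
  measurableSet_compl := fun A hA t => by
    have h : Aᶜ ∩ {ω | τ ω ≤ (t : ℝ≥0∞)} =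
        {ω | τ ω ≤ (t : ℝ≥0∞)} \ (A ∩ {ω | τ ω ≤ (t : ℝ≥0∞)}) := by
      ext ω; by_cases h : ω ∈ A <;> simp [h]
    rw [h]
    exact (hτ t).diff (hA t)
  measurableSet_iUnion := fun s hs t => by
    rw [Set.iUnion_inter]
    exact MeasurableSet.iUnion fun n => hs n t

/-- The σ-algebra `F_{τ-}`, generated by `F_0` together with all sets
`A ∩ {s < τ}` where `s : ℝ≥0` and `A ∈ F_s`. -/
def sigmaPre (F : Filtration ℝ≥0 m) (τ : Ω → ℝ≥0∞) : MeasurableSpace Ω :=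
  (F 0 : MeasurableSpace Ω) ⊔ MeasurableSpace.generateFrom
    {B | ∃ (s : ℝ≥0) (A : Set Ω), MeasurableSet[F s] A ∧ B = A ∩ {ω | (s : ℝ≥0∞) < τ ω}}

/-- Evaluation of a process at an extended stopping time (junk value at `∞`). -/
def ev (X : ℝ≥0 → Ω → ℝ) (τ : Ω → ℝ≥0∞) (ω : Ω) : ℝ := X (τ ω).toNNReal ω

/-- The underlying financial model, together with the standing assumptions:
nonnegative adapted assets `S i` vanishing from the default time `ζ` onwards, with
strictly positive a.s.-constant initial values `S0 i`; a nonnegative stochastic discount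
factor `Y` with `Y_0 = 1` a.s.; and a sequence `ζn` of stopping times nicely approximating
the default time such that every stopped process `(Y_{ζn ∧ t} S^i_{ζn ∧ t})_t` is a
`P`-a.s. càdlàg martingale.  The probability `P` lives on `F_∞ = ⨆ t, F t`. -/
structure Model (ι : Type*) {Ω : Type*} {m : MeasurableSpace Ω}
    (F : Filtration ℝ≥0 m) (P : Measure Ω) where
  S : ι → ℝ≥0 → Ω → ℝ
  Y : ℝ≥0 → Ω → ℝ
  S0 : ι → ℝ
  ζ : Ω → ℝ≥0∞
  ζn : ℕ → Ω → ℝ≥0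
  nonempty : Nonempty ι
  hFinf : (⨆ t : ℝ≥0, (F t : MeasurableSpace Ω)) = m
  hP : IsProbabilityMeasure P
  hζ : IsExtStoppingTime F ζ
  S_nonneg : ∀ i t ω, 0 ≤ S i t ω
  S_adapted : ∀ i, Adapted F (S i)
  S_default : ∀ i (t : ℝ≥0) ω, ζ ω ≤ (t : ℝ≥0∞) → S i t ω = 0
  S0_pos : ∀ i, 0 < S0 i
  S0_eq : ∀ i, ∀ᵐ ω ∂P, S i 0 ω = S0 i
  Y_nonneg : ∀ t ω, 0 ≤ Y t ω
  Y0 : ∀ᵐ ω ∂P, Y 0 ω = 1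
  ζn_stop : ∀ n, IsStoppingTime F (fun ω => (ζn n ω : WithTop ℝ≥0))
  ζn_mono : ∀ ω, Monotone fun n => ζn n ω
  ζn_le : ∀ (n : ℕ) ω, ζn n ω ≤ (n : ℝ≥0)
  ζn_tendsto : ∀ ω, Tendsto (fun n => (ζn n ω : ℝ≥0∞)) atTop (nhds (ζ ω))
  mart : ∀ (n : ℕ) (i : ι),
    Martingale (fun t ω => Y (min (ζn n ω) t) ω * S i (min (ζn n ω) t) ω) F P
  cadlag : ∀ (n : ℕ) (i : ι), ∀ᵐ ω ∂P,
    (∀ t : ℝ≥0, ContinuousWithinAt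
      (fun s => Y (min (ζn n ω) s) ω * S i (min (ζn n ω) s) ω) (Set.Ici t) t) ∧
    (∀ t : ℝ≥0, 0 < t → ∃ l : ℝ, Tendsto
      (fun s => Y (min (ζn n ω) s) ω * S i (min (ζn n ω) s) ω)
      (nhdsWithin t (Set.Iio t)) (nhds l))

variable {ι : Type*} {F : Filtration ℝ≥0 m} {P : Measure Ω}

/-- `Q` satisfies the valuation identity for asset `i`:  `Q` is a probability and, for every
extended stopping time `T` and nonnegative `F_T`-measurable `ξ`,
`E_P[Y_T S^i_T ξ ; T < ζ] = S^i_0 E_Q[ξ ; T < ζ]`. -/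
def Model.ValId (M : Model ι F P) (i : ι) (Q : Measure Ω) : Prop :=
  IsProbabilityMeasure Q ∧
  ∀ (T : Ω → ℝ≥0∞) (hT : IsExtStoppingTime F T) (ξ : Ω → ℝ≥0∞),
    Measurable[hT.measurableSpace] ξ →
    ∫⁻ ω in {ω | T ω < M.ζ ω}, ENNReal.ofReal (ev M.Y T ω * ev (M.S i) T ω) * ξ ω ∂P
      = ENNReal.ofReal (M.S0 i) * ∫⁻ ω in {ω | T ω < M.ζ ω}, ξ ω ∂Q

/-- The asset-price ratio process `R^{ij} = (S^i / S^j) 1_{S^j > 0}`. -/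
def Model.R (M : Model ι F P) (i j : ι) (t : ℝ≥0) (ω : Ω) : ℝ :=
  if 0 < M.S j t ω then M.S i t ω / M.S j t ω else 0

/-- `ρ^{ij} = liminf_n R^{ij}_{ζ_n}` (computed in `ℝ≥0∞`). -/
def Model.rho (M : Model ι F P) (i j : ι) (ω : Ω) : ℝ≥0∞ :=
  Filter.liminf (fun n => ENNReal.ofReal (M.R i j (M.ζn n ω) ω)) atTop

/-- The value `EX^{ij}(T) = E_P[Y_T (S^j_T − S^i_T)_+ ; T < ζ]` of the European option to
exchange asset `i` for asset `j` at time `T`. -/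
def Model.EX (M : Model ι F P) (i j : ι) (T : Ω → ℝ≥0∞) : ℝ≥0∞ :=
  ∫⁻ ω in {ω | T ω < M.ζ ω},
    ENNReal.ofReal (ev M.Y T ω * max (ev (M.S j) T ω - ev (M.S i) T ω) 0) ∂P

/-- The value `AX^{ij}(T) = sup_{τ ≤ T} EX^{ij}(τ)` of the American option to exchange
asset `i` for asset `j` up to time `T`; the supremum is over stopping times `τ ≤ T`. -/
def Model.AX (M : Model ι F P) (i j : ι) (T : Ω → ℝ≥0∞) : ℝ≥0∞ :=
  ⨆ (τ : Ω → ℝ≥0∞) (_ : IsExtStoppingTime F τ) (_ : ∀ ω, τ ω ≤ T ω), M.EX i j τ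


/-- If `Q^i` satisfies the valuation identity for asset `i`, then
`Q^i[ζ_n < ζ for all n] = 1`; equivalently `Q^i[ζ_n = ζ] = 0` for every `n`.  In
particular, `(ζ_n)` `Q^i`-a.s. announces the default time `ζ`. -/
theorem stmt3 {Ω ι : Type*} {m : MeasurableSpace Ω} {F : Filtration ℝ≥0 m} {P : Measure Ω}
    (M : Model ι F P) (i : ι) (Qi : Measure Ω) (hQi : M.ValId i Qi) :
    Qi {ω | ∀ n : ℕ, (M.ζn n ω : ℝ≥0∞) < M.ζ ω} = 1 ∧
    ∀ n : ℕ, Qi {ω | (M.ζn n ω : ℝ≥0∞) = M.ζ ω} = 0 := by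
  obtain ⟨hQprob, hval⟩ := hQi
  haveI := hQprob
  haveI := M.hP
  -- measurability of ζ
  have hζmeas : Measurable M.ζ := by
    apply measurable_of_Iic
    intro x
    induction x using ENNReal.recTopCoe with
    | top => simp
    | coe t => exact F.le t _ (M.hζ t)
  have hζnm : ∀ n : ℕ, Measurable (M.ζn n) := fun n =>
    measurable_of_Iic fun x => F.le x _ (by have h := M.ζn_stop n x; simp only [WithTop.coe_le_coe] at h; exact h)
  have hζnmeas : ∀ n : ℕ, Measurable fun ω => ((M.ζn n ω : ℝ≥0∞)) := fun n =>
    measurable_coe_nnreal_ennreal.comp (hζnm n)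
  have hA : ∀ n : ℕ, MeasurableSet {ω | (M.ζn n ω : ℝ≥0∞) < M.ζ ω} := fun n =>
    measurableSet_lt (hζnmeas n) hζmeas
  -- key : Qi {ζn < ζ} = 1
  have key : ∀ n : ℕ, Qi {ω | (M.ζn n ω : ℝ≥0∞) < M.ζ ω} = 1 := by
    intro n
    have hT : IsExtStoppingTime F (fun ω => ((M.ζn n ω : ℝ≥0∞))) := by
      intro t
      have h : {ω | ((M.ζn n ω : ℝ≥0∞)) ≤ (t : ℝ≥0∞)} = {ω | M.ζn n ω ≤ t} := by
        ext ω; simp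
      rw [h]; have h' := M.ζn_stop n t; simp only [WithTop.coe_le_coe] at h'; exact h'
    have hid := hval _ hT (fun _ => (1 : ℝ≥0∞)) measurable_const
    set A : Set Ω := {ω | (M.ζn n ω : ℝ≥0∞) < M.ζ ω} with hAdef
    have hAm : MeasurableSet A := hA n
    set g : Ω → ℝ≥0∞ := fun ω =>
      ENNReal.ofReal (M.Y (M.ζn n ω) ω * M.S i (M.ζn n ω) ω) with hgdef
    -- simplify LHS of the valuation identity
    have hLHS : (∫⁻ ω in {ω | ((M.ζn n ω : ℝ≥0∞)) < M.ζ ω},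
        ENNReal.ofReal (ev M.Y (fun ω => ((M.ζn n ω : ℝ≥0∞))) ω *
          ev (M.S i) (fun ω => ((M.ζn n ω : ℝ≥0∞))) ω) * (1 : ℝ≥0∞) ∂P)
        = ∫⁻ ω in A, g ω ∂P := by
      refine lintegral_congr fun ω => ?_
      simp [ev, g]
    -- the integrand vanishes off A
    have hz : ∫⁻ ω in Aᶜ, g ω ∂P = 0 := by
      have h0 : ∫⁻ ω in Aᶜ, g ω ∂P = ∫⁻ _ω in Aᶜ, (0 : ℝ≥0∞) ∂P := by
        refine setLIntegral_congr_fun hAm.compl (fun ω hω => ?_)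
        have hle : M.ζ ω ≤ ((M.ζn n ω : ℝ≥0∞)) := not_lt.1 hω
        simp [g, M.S_default i _ ω hle]
      simp [h0]
    -- the full integral equals S0 via the martingale property
    have hmart := M.mart n i
    have hXn : (fun ω => M.Y (min (M.ζn n ω) (n : ℝ≥0)) ω *
          M.S i (min (M.ζn n ω) (n : ℝ≥0)) ω)
        = fun ω => M.Y (M.ζn n ω) ω * M.S i (M.ζn n ω) ω := by
      funext ω; rw [min_eq_left (M.ζn_le n ω)]
    have hint : Integrable (fun ω => M.Y (M.ζn n ω) ω * M.S i (M.ζn n ω) ω) P := by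
      have h := hmart.integrable (n : ℝ≥0); rwa [hXn] at h
    have hfull : ∫⁻ ω, g ω ∂P = ENNReal.ofReal (M.S0 i) := by
      have h1 : ∫⁻ ω, g ω ∂P
          = ENNReal.ofReal (∫ ω, M.Y (M.ζn n ω) ω * M.S i (M.ζn n ω) ω ∂P) :=
        (ofReal_integral_eq_lintegral_ofReal hint
          (ae_of_all _ fun ω => mul_nonneg (M.Y_nonneg _ _) (M.S_nonneg _ _ _))).symm
      have h2 : ∫ ω, M.Y (M.ζn n ω) ω * M.S i (M.ζn n ω) ω ∂P
          = ∫ ω, M.Y (min (M.ζn n ω) 0) ω * M.S i (min (M.ζn n ω) 0) ω ∂P := by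
        have h := hmart.setIntegral_eq (i := (0 : ℝ≥0)) (j := (n : ℝ≥0)) zero_le
          (s := Set.univ) MeasurableSet.univ
        rw [setIntegral_univ, setIntegral_univ] at h
        rw [← hXn]; exact h.symm
      have h3 : ∫ ω, M.Y (min (M.ζn n ω) 0) ω * M.S i (min (M.ζn n ω) 0) ω ∂P
          = M.S0 i := by
        have hcongr : (fun ω => M.Y (min (M.ζn n ω) 0) ω * M.S i (min (M.ζn n ω) 0) ω)
            =ᵐ[P] fun _ => M.S0 i := by
          filter_upwards [M.Y0, M.S0_eq i] with ω hy hs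
          simp [min_eq_right (show (0 : ℝ≥0) ≤ M.ζn n ω from zero_le), hy, hs]
        rw [integral_congr_ae hcongr, integral_const, probReal_univ,
          one_smul]
      rw [h1, h2, h3]
    have hAint : ∫⁻ ω in A, g ω ∂P = ENNReal.ofReal (M.S0 i) := by
      have hsum := lintegral_add_compl g hAm (μ := P)
      rw [hz, add_zero] at hsum
      exact hsum.trans hfull
    -- combine with the valuation identity
    rw [hLHS, hAint] at hid
    have hRHS : (∫⁻ ω in {ω | ((M.ζn n ω : ℝ≥0∞)) < M.ζ ω}, (1 : ℝ≥0∞) ∂Qi) = Qi A := by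
      rw [setLIntegral_one]
    rw [hRHS] at hid
    have hS0 : ENNReal.ofReal (M.S0 i) ≠ 0 := (ENNReal.ofReal_pos.2 (M.S0_pos i)).ne'
    have := (ENNReal.mul_right_inj hS0 ENNReal.ofReal_ne_top).1
      (show ENNReal.ofReal (M.S0 i) * Qi A = ENNReal.ofReal (M.S0 i) * 1 by
        rw [mul_one, ← hid])
    exact this
  -- second conclusion
  have hcompl : ∀ n : ℕ, Qi ({ω | (M.ζn n ω : ℝ≥0∞) < M.ζ ω}ᶜ) = 0 := by
    intro n
    rw [measure_compl (hA n) (measure_ne_top _ _), key n, measure_univ, tsub_self]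
  have h2 : ∀ n : ℕ, Qi {ω | (M.ζn n ω : ℝ≥0∞) = M.ζ ω} = 0 := by
    intro n
    refine measure_mono_null (fun ω hω => ?_) (hcompl n)
    simp only [Set.mem_compl_iff, Set.mem_setOf_eq, not_lt]
    exact le_of_eq (Set.mem_setOf_eq ▸ hω).symm
  refine ⟨?_, h2⟩
  have hBmeas : MeasurableSet {ω | ∀ n : ℕ, (M.ζn n ω : ℝ≥0∞) < M.ζ ω} := by
    have : {ω | ∀ n : ℕ, (M.ζn n ω : ℝ≥0∞) < M.ζ ω}
        = ⋂ n : ℕ, {ω | (M.ζn n ω : ℝ≥0∞) < M.ζ ω} := by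
      ext ω; simp
    rw [this]; exact MeasurableSet.iInter fun n => hA n
  rw [← prob_compl_eq_zero_iff hBmeas]
  refine measure_mono_null (t := ⋃ n : ℕ, ({ω | (M.ζn n ω : ℝ≥0∞) < M.ζ ω}ᶜ))
    (fun ω hω => ?_) (measure_iUnion_null fun n => hcompl n)
  simp only [Set.mem_compl_iff, Set.mem_setOf_eq, not_forall] at hω
  obtain ⟨k, hk⟩ := hω
  exact Set.mem_iUnion.2 ⟨k, by simpa using hk⟩

end ExchangeOptions
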